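/- Let H be a group acting on a set Y such that there exists an H-invariant mean on Y and the stabiliser in H of every point y ∈ Y is an amenable group. Then H is amenable. -/

import Mathlib

/-- A finitely additive invariant probability mean on a `G`-set `Y`. -/
structure InvariantMean (G : Type*) [Group G] (Y : Type*) [MulAction G Y] where
  m : Set Y → ℝ
  nonneg : ∀ A : Set Y, 0 ≤ m A
  total : m Set.univ = 1
  add_disjoint : ∀ A B : Set Y, Disjoint A B → m (A ∪ B) = m A + m B
  invariant : ∀ (g : G) (A : Set Y), m ((g • ·) '' A) = m A

/-- A group is amenable if it admits an invariant mean for its left translation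
action on itself. -/
def Amenable (G : Type*) [Group G] : Prop :=
  Nonempty (InvariantMean G G)

namespace InvariantMean
variable {G : Type*} [Group G] {Y : Type*} [MulAction G Y] (m : InvariantMean G Y)

lemma empty : m.m ∅ = 0 := by
  have := m.add_disjoint ∅ ∅ (disjoint_bot_left)
  simp at this; linarith

lemma mono {A B : Set Y} (h : A ⊆ B) : m.m A ≤ m.m B := by
  have : B = A ∪ (B \ A) := by simp [Set.union_diff_cancel h]
  rw [this, m.add_disjoint _ _ Set.disjoint_sdiff_right]
  have := m.nonneg (B \ A); linarith

lemma le_one (A : Set Y) : m.m A ≤ 1 := by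
  have := m.mono (Set.subset_univ A); rw [m.total] at this; exact this

lemma finset_union (s : Finset ℕ) (A : ℕ → Set Y)
    (hd : ∀ i ∈ s, ∀ j ∈ s, i ≠ j → Disjoint (A i) (A j)) :
    m.m (⋃ i ∈ s, A i) = ∑ i ∈ s, m.m (A i) := by
  classical
  induction s using Finset.induction_on with
  | empty => simpa using m.empty
  | @insert a s ha ih =>
    rw [Finset.set_biUnion_insert, Finset.sum_insert ha,
      m.add_disjoint _ _ ?_, ih (fun i hi j hj => hd i (Finset.mem_insert_of_mem hi) j (Finset.mem_insert_of_mem hj))]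
    simp only [Set.disjoint_iUnion_right]
    intro i hi
    exact hd a (Finset.mem_insert_self a s) i (Finset.mem_insert_of_mem hi) (fun h => ha (h ▸ hi))

/-- "Integral" of a bounded `ℕ`-valued function against `m`. -/
def E (u : Y → ℕ) (B : ℕ) : ℝ := ∑ k ∈ Finset.range B, m.m {y | k < u y}

lemma E_nonneg (u : Y → ℕ) (B : ℕ) : 0 ≤ m.E u B :=
  Finset.sum_nonneg fun k _ => m.nonneg _

lemma E_bound_indep {u : Y → ℕ} {B B' : ℕ} (hB : ∀ y, u y ≤ B) (h : B ≤ B') :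
    m.E u B' = m.E u B := by
  unfold E
  rw [← Finset.sum_range_add_sum_Ico _ h]
  have : ∀ k ∈ Finset.Ico B B', m.m {y | k < u y} = 0 := by
    intro k hk
    have : {y | k < u y} = (∅ : Set Y) := by
      ext y; simp only [Set.mem_setOf_eq, Set.mem_empty_iff_false, iff_false, not_lt]
      exact (hB y).trans (Finset.mem_Ico.mp hk).1
    rw [this, m.empty]
  rw [Finset.sum_eq_zero this, add_zero]

lemma E_mono {u v : Y → ℕ} (h : ∀ y, u y ≤ v y) (B : ℕ) : m.E u B ≤ m.E v B :=
  Finset.sum_le_sum fun k _ => m.mono (fun y hy => lt_of_lt_of_le hy (h y))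

lemma E_const (c : ℕ) : m.E (fun _ => c) c = c := by
  unfold E
  have : ∀ k ∈ Finset.range c, m.m {y : Y | k < c} = 1 := by
    intro k hk
    have : {y : Y | k < c} = Set.univ := by
      ext y; simpa using Finset.mem_range.mp hk
    rw [this, m.total]
  rw [Finset.sum_congr rfl this]; simp

/-- adding an indicator -/
lemma E_add_indicator (u : Y → ℕ) (S : Set Y) (B : ℕ) (hB : ∀ y, u y ≤ B) :
    m.E (fun y => u y + S.indicator 1 y) (B + 1) = m.E u B + m.m S := by
  classical
  have hsplit : ∀ k : ℕ, {y | k < u y + S.indicator 1 y}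
      = {y | k < u y} ∪ ({y | u y = k} ∩ S) := by
    intro k; ext y
    by_cases hyS : y ∈ S <;>
      simp [Set.indicator_apply, hyS] <;> omega
  have hdisj : ∀ k : ℕ, Disjoint {y | k < u y} ({y | u y = k} ∩ S) := by
    intro k
    rw [Set.disjoint_left]; rintro y hy ⟨hy2, _⟩
    simp only [Set.mem_setOf_eq] at hy hy2; omega
  unfold E
  have h1 : ∀ k ∈ Finset.range (B+1),
      m.m {y | k < u y + S.indicator 1 y} = m.m {y | k < u y} + m.m ({y | u y = k} ∩ S) := by
    intro k _
    rw [hsplit k, m.add_disjoint _ _ (hdisj k)]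
  rw [Finset.sum_congr rfl h1, Finset.sum_add_distrib]
  congr 1
  · rw [Finset.sum_range_succ]
    have : {y | B < u y} = (∅ : Set Y) := by
      ext y; simp only [Set.mem_setOf_eq, Set.mem_empty_iff_false, iff_false, not_lt]; exact hB y
    rw [this, m.empty, add_zero]
  · have : m.m (⋃ k ∈ Finset.range (B+1), ({y | u y = k} ∩ S)) =
        ∑ k ∈ Finset.range (B+1), m.m ({y | u y = k} ∩ S) := by
      apply m.finset_union
      intro i _ j _ hij
      rw [Set.disjoint_left]; rintro y ⟨h1, _⟩ ⟨h2, _⟩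
      exact hij (h1.symm.trans h2)
    rw [← this]
    congr 1
    ext y
    simp only [Set.mem_iUnion, Set.mem_inter_iff, Set.mem_setOf_eq, Finset.mem_range]
    constructor
    · rintro ⟨k, _, _, hy⟩; exact hy
    · intro hy; exact ⟨u y, Nat.lt_succ_of_le (hB y), rfl, hy⟩

lemma E_add {u v : Y → ℕ} {B C : ℕ} (hu : ∀ y, u y ≤ B) (hv : ∀ y, v y ≤ C) :
    m.E (fun y => u y + v y) (B + C) = m.E u B + m.E v C := by
  classical
  induction C generalizing v with
  | zero =>
    have hv0 : ∀ y, v y = 0 := fun y => Nat.le_zero.mp (hv y)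
    simp only [hv0, add_zero]
    simp [E]
  | succ C ih =>
    set v' : Y → ℕ := fun y => min (v y) C with hv'
    have hv'C : ∀ y, v' y ≤ C := fun y => min_le_right _ _
    have hdec : ∀ y, v y = v' y + Set.indicator {y | C < v y} 1 y := by
      intro y
      by_cases h : C < v y
      · have : v y = C + 1 := le_antisymm (hv y) h
        simp [hv', this, h, Set.indicator_apply, Set.mem_setOf_eq]
      · simp [hv', Set.indicator_apply, Set.mem_setOf_eq, h, Nat.min_eq_left (not_lt.mp h)]
    have huv' : ∀ y, u y + v' y ≤ B + C := fun y => Nat.add_le_add (hu y) (hv'C y)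
    have step1 : m.E (fun y => u y + v y) (B + (C+1)) =
        m.E (fun y => u y + v' y) (B + C) + m.m {y | C < v y} := by
      have h := m.E_add_indicator (fun y => u y + v' y) {y | C < v y} (B + C) huv'
      rw [← h]
      congr 1
      ext y; rw [hdec y]; ring
    have step2 : m.E v (C + 1) = m.E v' C + m.m {y | C < v y} := by
      have h := m.E_add_indicator v' {y | C < v y} C hv'C
      rw [← h]
      congr 1
      ext y; rw [← hdec y]
    rw [step1, step2, ih hv'C]
    ring

lemma E_nsmul {u : Y → ℕ} {B : ℕ} (hu : ∀ y, u y ≤ B) (n : ℕ) :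
    m.E (fun y => n * u y) (n * B) = n * m.E u B := by
  induction n with
  | zero => simp [E]
  | succ n ih =>
    have h1 : ∀ y, n * u y ≤ n * B := fun y => Nat.mul_le_mul_left n (hu y)
    have : m.E (fun y => n * u y + u y) (n * B + B) = m.E (fun y => n * u y) (n*B) + m.E u B :=
      m.E_add h1 hu
    have he : (fun y => (n+1) * u y) = fun y => n * u y + u y := by
      ext y; ring
    have hB : (n+1) * B = n * B + B := by ring
    rw [he, hB, this, ih]
    push_cast; ring

/-- floor approximation -/
noncomputable def u (f : Y → ℝ) (n : ℕ) (y : Y) : ℕ := ⌊n * f y⌋₊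

/-- Riemann-type sum. -/
noncomputable def S (f : Y → ℝ) (n : ℕ) : ℝ := m.E (u f n) n / n

lemma u_le {f : Y → ℝ} (hf : ∀ y, f y ≤ 1) (n : ℕ) : ∀ y, u f n y ≤ n := by
  intro y
  have h : (n:ℝ) * f y ≤ (n:ℝ) := by
    have h0 : (0:ℝ) ≤ n := Nat.cast_nonneg n
    nlinarith [hf y]
  exact (Nat.floor_le_floor h).trans (by simp)

lemma S_nonneg (f : Y → ℝ) (n : ℕ) : 0 ≤ m.S f n :=
  div_nonneg (m.E_nonneg _ _) (Nat.cast_nonneg n)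

/-- key comparison: `S f k ≤ S f n + 1/n` for positive `n`, `k`. -/
lemma S_le_S {f : Y → ℝ} (hf0 : ∀ y, 0 ≤ f y) (hf1 : ∀ y, f y ≤ 1)
    {n k : ℕ} (hn : 0 < n) (hk : 0 < k) :
    m.S f k ≤ m.S f n + 1 / n := by
  have key : ∀ y, n * u f k y ≤ k * u f n y + k := by
    intro y
    have h1 : (u f k y : ℝ) ≤ k * f y := Nat.floor_le (mul_nonneg (Nat.cast_nonneg k) (hf0 y))
    have h2 : (n : ℝ) * f y < u f n y + 1 := Nat.lt_floor_add_one _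
    have : (n * u f k y : ℝ) < (k * u f n y + k : ℕ) := by
      push_cast
      calc (n:ℝ) * u f k y ≤ n * (k * f y) := by
            apply mul_le_mul_of_nonneg_left h1 (Nat.cast_nonneg n)
        _ = k * (n * f y) := by ring
        _ < k * (u f n y + 1) := by
            apply mul_lt_mul_of_pos_left h2 (by exact_mod_cast hk)
        _ = k * u f n y + k := by ring
    exact_mod_cast this.le
  have hb1 : ∀ y, n * u f k y ≤ n * k := fun y => Nat.mul_le_mul_left n (u_le hf1 k y)
  have hb2 : ∀ y, k * u f n y ≤ k * n := fun y => Nat.mul_le_mul_left k (u_le hf1 n y)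
  have e1 : m.E (fun y => n * u f k y) (n*k + k) = n * m.E (u f k) k := by
    rw [m.E_bound_indep hb1 (Nat.le_add_right _ _), m.E_nsmul (u_le hf1 k) n]
  have e2 : m.E (fun y => k * u f n y + k) (k*n + k) = k * m.E (u f n) n + k := by
    have : m.E (fun y => k * u f n y + (fun _ => k) y) (k*n + k) =
        m.E (fun y => k * u f n y) (k*n) + m.E (fun _ => k) k := m.E_add hb2 (fun _ => le_refl k)
    rw [show (fun y => k * u f n y + k) = (fun y => k * u f n y + (fun _ : Y => k) y) from rfl,
       this, m.E_nsmul (u_le hf1 n) k, m.E_const]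
  have hmono : m.E (fun y => n * u f k y) (n*k + k) ≤ m.E (fun y => k * u f n y + k) (n*k + k) :=
    m.E_mono key _
  rw [e1] at hmono
  rw [show k*n + k = n*k + k by ring] at e2
  rw [e2] at hmono
  -- hmono : n * E(u f k) k ≤ k * E(u f n) n + k
  have hnpos : (0:ℝ) < n := by exact_mod_cast hn
  have hkpos : (0:ℝ) < k := by exact_mod_cast hk
  unfold S
  rw [← add_div, div_le_div_iff₀ hkpos hnpos]
  nlinarith [hmono]

/-- The integral of a `[0,1]`-valued function. -/
noncomputable def I (f : Y → ℝ) : ℝ := ⨆ n : ℕ, m.S f (n + 1)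

lemma bddAbove_S {f : Y → ℝ} (hf0 : ∀ y, 0 ≤ f y) (hf1 : ∀ y, f y ≤ 1) :
    BddAbove (Set.range fun n : ℕ => m.S f (n + 1)) := by
  refine ⟨m.S f 1 + 1, ?_⟩
  rintro x ⟨n, rfl⟩
  simpa using m.S_le_S hf0 hf1 (n := 1) (k := n+1) one_pos (Nat.succ_pos n)

lemma S_le_I {f : Y → ℝ} (hf0 : ∀ y, 0 ≤ f y) (hf1 : ∀ y, f y ≤ 1) (n : ℕ) :
    m.S f (n + 1) ≤ m.I f :=
  le_ciSup (m.bddAbove_S hf0 hf1) n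

lemma I_le_S {f : Y → ℝ} (hf0 : ∀ y, 0 ≤ f y) (hf1 : ∀ y, f y ≤ 1) (n : ℕ) :
    m.I f ≤ m.S f (n + 1) + 1 / (n + 1) := by
  apply ciSup_le
  intro k
  have := m.S_le_S hf0 hf1 (n := n+1) (k := k+1) (Nat.succ_pos n) (Nat.succ_pos k)
  exact_mod_cast this

lemma I_nonneg {f : Y → ℝ} (hf0 : ∀ y, 0 ≤ f y) (hf1 : ∀ y, f y ≤ 1) : 0 ≤ m.I f :=
  (m.S_nonneg f 1).trans (m.S_le_I hf0 hf1 0)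

lemma I_one : m.I (fun _ : Y => 1) = 1 := by
  have hS : ∀ n : ℕ, m.S (fun _ : Y => 1) (n + 1) = 1 := by
    intro n
    have hu : u (fun _ : Y => (1:ℝ)) (n+1) = fun _ => n+1 := by
      ext y; simp only [u, mul_one]
      exact Nat.floor_natCast _
    unfold S
    rw [hu]
    rw [show m.E (fun _ => n+1) (n+1) = ((n:ℝ)+1) by exact_mod_cast m.E_const (n+1)]
    field_simp
    norm_cast
  unfold I
  simp only [hS]
  exact ciSup_const

lemma S_add_ge {f g : Y → ℝ} (hf0 : ∀ y, 0 ≤ f y) (hg0 : ∀ y, 0 ≤ g y)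
    (hfg1 : ∀ y, f y + g y ≤ 1) (n : ℕ) :
    m.S f n + m.S g n ≤ m.S (fun y => f y + g y) n := by
  have hf1 : ∀ y, f y ≤ 1 := fun y => by have := hfg1 y; have := hg0 y; linarith
  have hg1 : ∀ y, g y ≤ 1 := fun y => by have := hfg1 y; have := hf0 y; linarith
  have hpt : ∀ y, u f n y + u g n y ≤ u (fun y => f y + g y) n y := by
    intro y
    apply Nat.le_floor
    push_cast
    have h1 : (u f n y : ℝ) ≤ n * f y := Nat.floor_le (mul_nonneg (Nat.cast_nonneg n) (hf0 y))
    have h2 : (u g n y : ℝ) ≤ n * g y := Nat.floor_le (mul_nonneg (Nat.cast_nonneg n) (hg0 y))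
    nlinarith
  have hb : ∀ y, u f n y + u g n y ≤ n + n :=
    fun y => Nat.add_le_add (u_le hf1 n y) (u_le hg1 n y)
  have e : m.E (fun y => u f n y + u g n y) (n + n) = m.E (u f n) n + m.E (u g n) n :=
    m.E_add (u_le hf1 n) (u_le hg1 n)
  have hb' : ∀ y, u f n y + u g n y ≤ n := fun y =>
    (hpt y).trans (u_le hfg1 n y)
  have e' : m.E (fun y => u f n y + u g n y) (n + n) = m.E (fun y => u f n y + u g n y) n :=
    m.E_bound_indep hb' (Nat.le_add_right n n)
  have hmono := m.E_mono hpt n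
  rw [← e', e] at hmono
  rcases Nat.eq_zero_or_pos n with hn | hn
  · subst hn; simp [S, E]
  · have hnpos : (0:ℝ) < n := by exact_mod_cast hn
    unfold S
    rw [← add_div, div_le_div_iff_of_pos_right hnpos]
    exact hmono

lemma S_add_le {f g : Y → ℝ} (hf0 : ∀ y, 0 ≤ f y) (hg0 : ∀ y, 0 ≤ g y)
    (hfg1 : ∀ y, f y + g y ≤ 1) {n : ℕ} (hn : 0 < n) :
    m.S (fun y => f y + g y) n ≤ m.S f n + m.S g n + 1 / n := by
  have hf1 : ∀ y, f y ≤ 1 := fun y => by have := hfg1 y; have := hg0 y; linarith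
  have hg1 : ∀ y, g y ≤ 1 := fun y => by have := hfg1 y; have := hf0 y; linarith
  have hpt : ∀ y, u (fun y => f y + g y) n y ≤ u f n y + (u g n y + 1) := by
    intro y
    have h1 : (n:ℝ) * f y < u f n y + 1 := Nat.lt_floor_add_one _
    have h2 : (n:ℝ) * g y < u g n y + 1 := Nat.lt_floor_add_one _
    rw [← Nat.lt_succ_iff]
    apply (Nat.floor_lt (mul_nonneg (Nat.cast_nonneg n) (add_nonneg (hf0 y) (hg0 y)))).mpr
    have : (n:ℝ) * (f y + g y) < ((u f n y + (u g n y + 1) + 1 : ℕ) : ℝ) := by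
      push_cast; nlinarith
    exact_mod_cast this
  have e : m.E (fun y => u f n y + (u g n y + 1)) (n + (n + 1))
      = m.E (u f n) n + (m.E (u g n) n + 1) := by
    rw [m.E_add (u_le hf1 n) (fun y => Nat.add_le_add (u_le hg1 n y) (le_refl 1))]
    congr 1
    rw [show (fun y => u g n y + 1) = (fun y => u g n y + (fun _ : Y => 1) y) from rfl,
      m.E_add (u_le hg1 n) (fun _ => le_refl 1)]
    norm_num
    exact_mod_cast m.E_const 1
  have e' : m.E (u (fun y => f y + g y) n) (n + (n + 1))
      = m.E (u (fun y => f y + g y) n) n :=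
    m.E_bound_indep (u_le hfg1 n) (by omega)
  have hmono := m.E_mono hpt (n + (n+1))
  rw [e, e'] at hmono
  unfold S
  have hnpos : (0:ℝ) < n := by exact_mod_cast hn
  rw [← add_div, ← add_div, div_le_div_iff₀ hnpos hnpos]
  nlinarith [hmono]

lemma I_add {f g : Y → ℝ} (hf0 : ∀ y, 0 ≤ f y) (hg0 : ∀ y, 0 ≤ g y)
    (hfg1 : ∀ y, f y + g y ≤ 1) :
    m.I (fun y => f y + g y) = m.I f + m.I g := by
  have hf1 : ∀ y, f y ≤ 1 := fun y => by have := hfg1 y; have := hg0 y; linarith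
  have hg1 : ∀ y, g y ≤ 1 := fun y => by have := hfg1 y; have := hf0 y; linarith
  have hfg0 : ∀ y, 0 ≤ f y + g y := fun y => add_nonneg (hf0 y) (hg0 y)
  have key : ∀ n : ℕ, |m.I (fun y => f y + g y) - (m.I f + m.I g)| ≤ 2 / (n + 1) := by
    intro n
    have h1 : m.I (fun y => f y + g y) ≤ m.S (fun y => f y + g y) (n+1) + 1/(n+1) :=
      m.I_le_S hfg0 hfg1 n
    have h2 := m.S_add_le hf0 hg0 hfg1 (Nat.succ_pos n) (f := f) (g := g) (n := n+1)
    have h3 : m.S f (n+1) ≤ m.I f := m.S_le_I hf0 hf1 n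
    have h4 : m.S g (n+1) ≤ m.I g := m.S_le_I hg0 hg1 n
    have h5 : m.S f (n+1) + m.S g (n+1) ≤ m.S (fun y => f y + g y) (n+1) :=
      m.S_add_ge hf0 hg0 hfg1 (n+1)
    have h6 : m.S (fun y => f y + g y) (n+1) ≤ m.I (fun y => f y + g y) :=
      m.S_le_I hfg0 hfg1 n
    have h7 : m.I f ≤ m.S f (n+1) + 1/(n+1) := m.I_le_S hf0 hf1 n
    have h8 : m.I g ≤ m.S g (n+1) + 1/(n+1) := m.I_le_S hg0 hg1 n
    rw [abs_le]
    have hc : ((n:ℝ)+1) ≠ 0 := by positivity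
    have h9 : 2/((n:ℝ)+1) = 1/((n:ℝ)+1) + 1/((n:ℝ)+1) := by ring
    push_cast at h1 h2 h7 h8 ⊢
    constructor <;> linarith
  have habs : |m.I (fun y => f y + g y) - (m.I f + m.I g)| = 0 := by
    by_contra h
    have hpos : 0 < |m.I (fun y => f y + g y) - (m.I f + m.I g)| :=
      (abs_nonneg _).lt_of_ne (Ne.symm h)
    obtain ⟨n, hn⟩ := exists_nat_gt (2 / |m.I (fun y => f y + g y) - (m.I f + m.I g)|)
    have h1 := key n
    have h2 : (2:ℝ) / |m.I (fun y => f y + g y) - (m.I f + m.I g)| < n + 1 := by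
      push_cast; linarith
    rw [div_lt_iff₀ hpos] at h2
    rw [le_div_iff₀ (by positivity : (0:ℝ) < (n:ℝ)+1)] at h1
    nlinarith
  have := abs_eq_zero.mp habs
  linarith

lemma I_comp_smul (g : G) (f : Y → ℝ) :
    m.I (fun y => f (g⁻¹ • y)) = m.I f := by
  have hset : ∀ n k : ℕ, {y | k < u f n (g⁻¹ • y)} = (g • ·) '' {y | k < u f n y} := by
    intro n k
    ext y
    simp only [Set.mem_setOf_eq, Set.mem_image]
    constructor
    · intro h; exact ⟨g⁻¹ • y, h, by simp⟩
    · rintro ⟨x, hx, rfl⟩; simpa using hx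
  have hu : ∀ n, u (fun y => f (g⁻¹ • y)) n = fun y => u f n (g⁻¹ • y) := by
    intro n; ext y; rfl
  have hS : ∀ n, m.S (fun y => f (g⁻¹ • y)) n = m.S f n := by
    intro n
    unfold S E
    rw [hu]
    congr 1
    apply Finset.sum_congr rfl
    intro k _
    rw [show {y | k < u f n (g⁻¹ • y)} = (g • ·) '' {y | k < u f n y} from hset n k,
      m.invariant]
  unfold I
  simp only [hS]

end InvariantMean


section Fconstruction

variable {G : Type*} [Group G] {Y : Type*} [MulAction G Y]
variable (μ : ∀ y : Y, InvariantMean (MulAction.stabilizer G y) (MulAction.stabilizer G y))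
variable (r : Y → Y) (σ : Y → G)

/-- The fibre mean of a subset of `G` at a point `y`. -/
noncomputable def Fdef (A : Set G) (y : Y) : ℝ :=
  (μ (r y)).m {h : MulAction.stabilizer G (r y) | σ y * (h : G) ∈ A}

lemma Fdef_nonneg (A : Set G) (y : Y) : 0 ≤ Fdef μ r σ A y := (μ (r y)).nonneg _

lemma Fdef_le_one (A : Set G) (y : Y) : Fdef μ r σ A y ≤ 1 := (μ (r y)).le_one _

lemma Fdef_univ (y : Y) : Fdef μ r σ Set.univ y = 1 := by
  unfold Fdef
  rw [show {h : MulAction.stabilizer G (r y) | σ y * (h : G) ∈ (Set.univ : Set G)} = Set.univ by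
    ext h; simp]
  exact (μ (r y)).total

lemma Fdef_add {A B : Set G} (hAB : Disjoint A B) (y : Y) :
    Fdef μ r σ (A ∪ B) y = Fdef μ r σ A y + Fdef μ r σ B y := by
  unfold Fdef
  rw [show {h : MulAction.stabilizer G (r y) | σ y * (h : G) ∈ A ∪ B} =
      {h : MulAction.stabilizer G (r y) | σ y * (h : G) ∈ A} ∪
      {h : MulAction.stabilizer G (r y) | σ y * (h : G) ∈ B} by ext h; simp [Set.mem_union]]
  apply (μ (r y)).add_disjoint
  rw [Set.disjoint_left]
  intro h h1 h2
  exact Set.disjoint_left.mp hAB h1 h2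

lemma Fdef_smul (hr : ∀ (g : G) (y : Y), r (g • y) = r y) (hσ : ∀ y, σ y • r y = y)
    (g : G) (A : Set G) (y : Y) :
    Fdef μ r σ ((g * ·) '' A) y = Fdef μ r σ A (g⁻¹ • y) := by
  have hry : r (g⁻¹ • y) = r y := hr g⁻¹ y
  have himg : ∀ x : G, x ∈ (g * ·) '' A ↔ g⁻¹ * x ∈ A := by
    intro x
    constructor
    · rintro ⟨a, ha, rfl⟩; simpa using ha
    · intro hx; exact ⟨g⁻¹ * x, hx, by group⟩
  have hc : (σ (g⁻¹ • y))⁻¹ * g⁻¹ * σ y ∈ MulAction.stabilizer G (r y) := by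
    rw [MulAction.mem_stabilizer_iff]
    have h1 : σ (g⁻¹ • y) • r (g⁻¹ • y) = g⁻¹ • y := hσ (g⁻¹ • y)
    rw [hry] at h1
    calc ((σ (g⁻¹ • y))⁻¹ * g⁻¹ * σ y) • r y
        = (σ (g⁻¹ • y))⁻¹ • g⁻¹ • σ y • r y := by rw [mul_smul, mul_smul]
      _ = (σ (g⁻¹ • y))⁻¹ • g⁻¹ • y := by rw [hσ y]
      _ = (σ (g⁻¹ • y))⁻¹ • σ (g⁻¹ • y) • r y := by rw [h1]
      _ = r y := by rw [inv_smul_smul]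
  set c : MulAction.stabilizer G (r y) := ⟨(σ (g⁻¹ • y))⁻¹ * g⁻¹ * σ y, hc⟩ with hcdef
  unfold Fdef
  rw [hry]
  have key : {h : MulAction.stabilizer G (r y) | σ y * (h : G) ∈ (g * ·) '' A} =
      (fun h : MulAction.stabilizer G (r y) => c⁻¹ * h) ''
        {h : MulAction.stabilizer G (r y) | σ (g⁻¹ • y) * (h : G) ∈ A} := by
    ext h
    simp only [Set.mem_setOf_eq, Set.mem_image, himg]
    constructor
    · intro hh
      refine ⟨c * h, ?_, by group⟩
      show σ (g⁻¹ • y) * ((c * h : MulAction.stabilizer G (r y)) : G) ∈ A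
      rw [hcdef]
      push_cast
      rw [show σ (g⁻¹ • y) * ((σ (g⁻¹ • y))⁻¹ * g⁻¹ * σ y * (h:G)) = g⁻¹ * (σ y * h) by group]
      exact hh
    · rintro ⟨t, ht, rfl⟩
      show g⁻¹ * (σ y * ((c⁻¹ * t : MulAction.stabilizer G (r y)) : G)) ∈ A
      rw [hcdef] at *
      push_cast
      rw [show g⁻¹ * (σ y * (((σ (g⁻¹ • y))⁻¹ * g⁻¹ * σ y)⁻¹ * (t:G))) = σ (g⁻¹ • y) * t by group]
      exact ht
  have hmain : (μ (r y)).m {h : MulAction.stabilizer G (r y) | σ y * (h : G) ∈ (g * ·) '' A}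
      = (μ (r y)).m {h : MulAction.stabilizer G (r y) | σ (g⁻¹ • y) * (h : G) ∈ A} := by
    rw [key]
    have := (μ (r y)).invariant c⁻¹
      {h : MulAction.stabilizer G (r y) | σ (g⁻¹ • y) * (h : G) ∈ A}
    simpa [smul_eq_mul] using this
  exact hmain

end Fconstruction

theorem amenable_of_invariant_mean_of_amenable_stabilizers
    (G : Type*) [Group G] (Y : Type*) [MulAction G Y]
    (hmean : Nonempty (InvariantMean G Y))
    (hstab : ∀ y : Y, Amenable (MulAction.stabilizer G y)) :
    Amenable G := by
  classical
  obtain ⟨m⟩ := hmean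
  have μ : ∀ y : Y, InvariantMean (MulAction.stabilizer G y) (MulAction.stabilizer G y) :=
    fun y => Classical.choice (hstab y)
  let r : Y → Y := fun y => (Quotient.mk (MulAction.orbitRel G Y) y).out
  have hr : ∀ (g : G) (y : Y), r (g • y) = r y := by
    intro g y
    show (Quotient.mk (MulAction.orbitRel G Y) (g • y)).out = _
    congr 1
    exact Quotient.sound (MulAction.orbitRel_apply.mpr (MulAction.mem_orbit y g))
  have hsec : ∀ y : Y, ∃ g : G, g • r y = y := by
    intro y
    have h1 : r y ∈ MulAction.orbit G y :=
      MulAction.orbitRel_apply.mp (Quotient.mk_out y)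
    obtain ⟨g, hg⟩ := h1
    exact ⟨g⁻¹, by rw [← hg]; simp⟩
  choose σ hσ using hsec
  refine ⟨⟨fun A => m.I (Fdef μ r σ A), ?_, ?_, ?_, ?_⟩⟩
  · intro A
    exact m.I_nonneg (Fdef_nonneg μ r σ A) (Fdef_le_one μ r σ A)
  · show m.I (Fdef μ r σ Set.univ) = 1
    rw [show Fdef μ r σ Set.univ = fun _ => 1 from funext (Fdef_univ μ r σ)]
    exact m.I_one
  · intro A B hAB
    show m.I (Fdef μ r σ (A ∪ B)) = m.I (Fdef μ r σ A) + m.I (Fdef μ r σ B)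
    rw [show Fdef μ r σ (A ∪ B) = fun y => Fdef μ r σ A y + Fdef μ r σ B y from
      funext (Fdef_add μ r σ hAB)]
    exact m.I_add (Fdef_nonneg μ r σ A) (Fdef_nonneg μ r σ B)
      (fun y => (Fdef_add μ r σ hAB y) ▸ Fdef_le_one μ r σ (A ∪ B) y)
  · intro g A
    show m.I (Fdef μ r σ ((g • ·) '' A)) = m.I (Fdef μ r σ A)
    rw [show ((g • ·) '' A : Set G) = (g * ·) '' A by simp [smul_eq_mul]]
    rw [show Fdef μ r σ ((g * ·) '' A) = fun y => Fdef μ r σ A (g⁻¹ • y) from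
      funext (Fdef_smul μ r σ hr hσ g A)]
    exact m.I_comp_smul g (Fdef μ r σ A)
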